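/- arXiv:2502.02397 — 8 statements merged into one kernel-verified Lean document; each statement's English description precedes it below -/
import Mathlib

section
/- Let Σ be a symmetric positive definite p×p matrix, μ ∈ ℝ^p, c > 0, and let P be a p×2 matrix with orthonormal columns. If x ∈ ℝ^p satisfies (x−μ) Σ⁻¹ (x−μ)^T = c² and there exists s ∈ ℝ² with (x−μ) Σ⁻¹ = s P^T, then the projected point y = xP satisfies (y − μP)(P^T Σ P)⁻¹(y − μP)^T = c². -/
open Matrix

theorem projected_point_on_projected_ellipse {p : ℕ}
    (S : Matrix (Fin p) (Fin p) ℝ) (hS : S.PosDef)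
    (μ x : Fin p → ℝ) (c : ℝ) (hc : 0 < c)
    (P : Matrix (Fin p) (Fin 2) ℝ) (hP : Pᵀ * P = 1)
    (s : Fin 2 → ℝ)
    (hx : Matrix.vecMul (x - μ) S⁻¹ ⬝ᵥ (x - μ) = c ^ 2)
    (hs : Matrix.vecMul (x - μ) S⁻¹ = Matrix.vecMul s Pᵀ) :
    Matrix.vecMul (Matrix.vecMul x P - Matrix.vecMul μ P) (Pᵀ * S * P)⁻¹ ⬝ᵥ
      (Matrix.vecMul x P - Matrix.vecMul μ P) = c ^ 2 := by
  have hSu : IsUnit S := hS.isUnit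
  -- positive definiteness of PᵀSP
  have hPSP : (Pᵀ * S * P).PosDef := by
    refine Matrix.PosDef.of_dotProduct_mulVec_pos ?_ (fun v hv => ?_)
    · have := Matrix.isHermitian_conjTranspose_mul_mul P hS.isHermitian
      rwa [Matrix.conjTranspose_eq_transpose_of_trivial] at this
    · have hPv : P *ᵥ v ≠ 0 := by
        intro h
        have h2 : Pᵀ *ᵥ (P *ᵥ v) = 0 := by rw [h, Matrix.mulVec_zero]
        rw [Matrix.mulVec_mulVec, hP, Matrix.one_mulVec] at h2
        exact hv h2
      have h1 := hS.dotProduct_mulVec_pos hPv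
      show 0 < star v ⬝ᵥ (Pᵀ * S * P) *ᵥ v
      rw [Matrix.mul_assoc, ← Matrix.mulVec_mulVec, ← Matrix.mulVec_mulVec,
        star_trivial, Matrix.dotProduct_mulVec, Matrix.vecMul_transpose]
      simpa using h1
  have hPSPu : IsUnit (Pᵀ * S * P) := hPSP.isUnit
  -- d = x - μ recovered from hs
  have hd : x - μ = Matrix.vecMul s (Pᵀ * S) := by
    have := congrArg (fun v => Matrix.vecMul v S) hs
    simpa [Matrix.vecMul_vecMul,
      Matrix.nonsing_inv_mul S (isUnit_iff_ne_zero.mpr hS.det_pos.ne')] using this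
  have hMinv : (Pᵀ * S * P) * (Pᵀ * S * P)⁻¹ = 1 :=
    Matrix.mul_nonsing_inv _ (isUnit_iff_ne_zero.mpr hPSP.det_pos.ne')
  have hy : Matrix.vecMul x P - Matrix.vecMul μ P = Matrix.vecMul s (Pᵀ * S * P) := by
    rw [← Matrix.sub_vecMul, hd, Matrix.vecMul_vecMul, Matrix.mul_assoc]
  rw [hy, Matrix.vecMul_vecMul, hMinv, Matrix.vecMul_one]
  rw [hs, hd] at hx
  rw [← hx, ← Matrix.dotProduct_mulVec, Matrix.mulVec_transpose,
    Matrix.vecMul_vecMul, Matrix.mul_assoc]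
end

section
/- Let Σ be symmetric positive definite, μ ∈ ℝ^p, c > 0, and P a p×2 matrix with orthonormal columns. For every y ∈ ℝ² satisfying (y − μP)(P^T Σ P)⁻¹(y − μP)^T = c², there exists x ∈ ℝ^p on the ellipsoid (x−μ) Σ⁻¹ (x−μ)^T = c² with xP = y; explicitly one can take x = μ + s P^T Σ where s = (y − μP)(P^T Σ P)⁻¹. -/
open Matrix

theorem boundary_ellipse_point_lifts {p : ℕ}
    (S : Matrix (Fin p) (Fin p) ℝ) (hS : S.PosDef)
    (μ : Fin p → ℝ) (c : ℝ) (hc : 0 < c)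
    (P : Matrix (Fin p) (Fin 2) ℝ) (hP : Pᵀ * P = 1) :
    ∀ y : Fin 2 → ℝ,
      Matrix.vecMul (y - Matrix.vecMul μ P) (Pᵀ * S * P)⁻¹ ⬝ᵥ (y - Matrix.vecMul μ P) = c ^ 2 →
      ∃ x : Fin p → ℝ,
        Matrix.vecMul (x - μ) S⁻¹ ⬝ᵥ (x - μ) = c ^ 2 ∧
        Matrix.vecMul x P = y ∧
        x = μ + Matrix.vecMul
          (Matrix.vecMul (y - Matrix.vecMul μ P) (Pᵀ * S * P)⁻¹) (Pᵀ * S) := by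
  intro y hy
  -- PᵀSP is positive definite
  have hPinj : ∀ v : Fin 2 → ℝ, P *ᵥ v = 0 → v = 0 := by
    intro v hv
    have : Pᵀ *ᵥ (P *ᵥ v) = 0 := by rw [hv, mulVec_zero]
    rwa [mulVec_mulVec, hP, one_mulVec] at this
  have hPD : (Pᵀ * S * P).PosDef := by
    refine posDef_iff_dotProduct_mulVec.mpr ⟨?_, ?_⟩
    · have hSh : Sᵀ = S := hS.isHermitian
      show (Pᵀ * S * P)ᴴ = Pᵀ * S * P
      simp only [conjTranspose_eq_transpose_of_trivial, transpose_mul, transpose_transpose, hSh,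
        Matrix.mul_assoc]
    · intro v hv
      have hPv : P *ᵥ v ≠ 0 := fun h => hv (hPinj v h)
      have h0 := hS.dotProduct_mulVec_pos hPv
      have key : star v ⬝ᵥ (Pᵀ * S * P) *ᵥ v = star (P *ᵥ v) ⬝ᵥ S *ᵥ (P *ᵥ v) := by
        have : (Pᵀ * S * P) *ᵥ v = Pᵀ *ᵥ (S *ᵥ (P *ᵥ v)) := by
          simp [mulVec_mulVec, Matrix.mul_assoc]
        rw [this]
        simp only [star_trivial]
        rw [dotProduct_mulVec, vecMul_transpose]
      rw [key]
      exact h0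
  have hU : IsUnit (Pᵀ * S * P).det := hPD.isUnit.map (detMonoidHom)
  set s : Fin 2 → ℝ := Matrix.vecMul (y - Matrix.vecMul μ P) (Pᵀ * S * P)⁻¹ with hs
  set x : Fin p → ℝ := μ + Matrix.vecMul s (Pᵀ * S) with hx
  have hxμ : x - μ = Matrix.vecMul s (Pᵀ * S) := by simp [hx]
  have hsA : Matrix.vecMul s (Pᵀ * S * P) = y - Matrix.vecMul μ P := by
    rw [hs, vecMul_vecMul, Matrix.nonsing_inv_mul _ hU, vecMul_one]
  have hSU : IsUnit S.det := hS.isUnit.map (detMonoidHom)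
  refine ⟨x, ?_, ?_, hx⟩
  · have h1 : Matrix.vecMul (x - μ) S⁻¹ = Matrix.vecMul s Pᵀ := by
      rw [hxμ, vecMul_vecMul, Matrix.mul_assoc, Matrix.mul_nonsing_inv _ hSU, Matrix.mul_one]
    rw [h1, hxμ]
    have h2 : Matrix.vecMul s Pᵀ ⬝ᵥ Matrix.vecMul s (Pᵀ * S)
        = Matrix.vecMul s (Pᵀ * S * P) ⬝ᵥ s := by
      rw [vecMul_transpose, dotProduct_comm, dotProduct_mulVec, vecMul_vecMul]
    rw [h2, hsA, ← hy, hs, dotProduct_comm]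
  · calc Matrix.vecMul x P = Matrix.vecMul μ P + Matrix.vecMul (Matrix.vecMul s (Pᵀ * S)) P := by
          rw [hx, add_vecMul]
    _ = y := by rw [vecMul_vecMul, hsA]; ring
end

section
/- The image under the orthogonal projection x ↦ xP of the ellipsoid E = {x ∈ ℝ^p : (x−μ) Σ⁻¹ (x−μ)^T = c²} is contained in the closed elliptical disc {y ∈ ℝ² : (y − μP)(P^T Σ P)⁻¹(y − μP)^T ≤ c²}. -/
open Matrix

private lemma symm_quad {p : ℕ} {A : Matrix (Fin p) (Fin p) ℝ} (hA : Aᵀ = A)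
    (a b : Fin p → ℝ) : Matrix.vecMul a A ⬝ᵥ b = Matrix.vecMul b A ⬝ᵥ a := by
  rw [← Matrix.dotProduct_mulVec, ← hA, Matrix.mulVec_transpose, dotProduct_comm, hA]

theorem ellipsoid_projects_into_disc {p : ℕ}
    (S : Matrix (Fin p) (Fin p) ℝ) (hS : S.PosDef)
    (μ : Fin p → ℝ) (c : ℝ) (hc : 0 < c)
    (P : Matrix (Fin p) (Fin 2) ℝ) (hP : Pᵀ * P = 1) :
    (fun x : Fin p → ℝ => Matrix.vecMul x P) ''
        {x | Matrix.vecMul (x - μ) S⁻¹ ⬝ᵥ (x - μ) = c ^ 2} ⊆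
      {y | Matrix.vecMul (y - Matrix.vecMul μ P) (Pᵀ * S * P)⁻¹ ⬝ᵥ
        (y - Matrix.vecMul μ P) ≤ c ^ 2} := by
  rintro y ⟨x, hx, rfl⟩
  simp only [Set.mem_setOf_eq] at hx ⊢
  set v : Fin p → ℝ := x - μ with hv
  clear_value v
  have hyμ : Matrix.vecMul x P - Matrix.vecMul μ P = Matrix.vecMul v P := by
    rw [hv, Matrix.sub_vecMul]
  rw [hyμ]
  -- basic symmetry facts
  have hSt : Sᵀ = S := by
    have := hS.isHermitian
    rwa [Matrix.IsHermitian, Matrix.conjTranspose_eq_transpose_of_trivial] at this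
  have hSit : (S⁻¹)ᵀ = S⁻¹ := by rw [Matrix.transpose_nonsing_inv, hSt]
  set M : Matrix (Fin 2) (Fin 2) ℝ := Pᵀ * S * P with hM
  have hMt : Mᵀ = M := by
    rw [hM, Matrix.transpose_mul, Matrix.transpose_mul, Matrix.transpose_transpose, hSt,
      Matrix.mul_assoc]
  -- M is positive definite
  have hMpd : M.PosDef := by
    refine Matrix.PosDef.of_dotProduct_mulVec_pos ?_ (fun u hu => ?_)
    · rw [Matrix.IsHermitian, Matrix.conjTranspose_eq_transpose_of_trivial, hMt]
    · have hPu : P *ᵥ u ≠ 0 := by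
        intro h
        have : (Pᵀ * P) *ᵥ u = 0 := by
          rw [← Matrix.mulVec_mulVec, h, Matrix.mulVec_zero]
        rw [hP, Matrix.one_mulVec] at this
        exact hu this
      have := hS.dotProduct_mulVec_pos hPu
      simp only [star_trivial] at this ⊢
      calc u ⬝ᵥ (M *ᵥ u) = u ⬝ᵥ (Pᵀ *ᵥ (S *ᵥ (P *ᵥ u))) := by
            rw [hM, ← Matrix.mulVec_mulVec, ← Matrix.mulVec_mulVec]
        _ = (P *ᵥ u) ⬝ᵥ (S *ᵥ (P *ᵥ u)) := by
            rw [Matrix.dotProduct_mulVec, Matrix.vecMul_transpose]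
        _ > 0 := this
  have hMinv : M⁻¹ * M = 1 := Matrix.nonsing_inv_mul M hMpd.det_pos.ne'.isUnit
  have hMt' : (M⁻¹)ᵀ = M⁻¹ := by rw [Matrix.transpose_nonsing_inv, hMt]
  have hSinv : S⁻¹ * S = 1 := Matrix.nonsing_inv_mul S hS.det_pos.ne'.isUnit
  have hSinv' : S * S⁻¹ = 1 := Matrix.mul_nonsing_inv S hS.det_pos.ne'.isUnit
  -- key vectors
  set w : Fin 2 → ℝ := Matrix.vecMul v P with hw
  set u : Fin 2 → ℝ := Matrix.vecMul w M⁻¹ with hu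
  set z : Fin p → ℝ := Matrix.vecMul u Pᵀ with hz
  set b : Fin p → ℝ := Matrix.vecMul z S with hb
  set t : ℝ := Matrix.vecMul w M⁻¹ ⬝ᵥ w with ht
  -- the target quantity is t
  -- (b) ⟨v, b⟩ = t
  have hvb : Matrix.vecMul v S⁻¹ ⬝ᵥ b = t := by
    calc Matrix.vecMul v S⁻¹ ⬝ᵥ b
        = Matrix.vecMul v S⁻¹ ⬝ᵥ (Sᵀ *ᵥ z) := by rw [hb, Matrix.mulVec_transpose]
      _ = Matrix.vecMul (Matrix.vecMul v S⁻¹) Sᵀ ⬝ᵥ z := by rw [Matrix.dotProduct_mulVec]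
      _ = Matrix.vecMul v (S⁻¹ * S) ⬝ᵥ z := by rw [hSt, Matrix.vecMul_vecMul]
      _ = v ⬝ᵥ z := by rw [hSinv, Matrix.vecMul_one]
      _ = v ⬝ᵥ (P *ᵥ u) := by rw [hz, Matrix.vecMul_transpose]
      _ = Matrix.vecMul v P ⬝ᵥ u := by rw [Matrix.dotProduct_mulVec]
      _ = w ⬝ᵥ Matrix.vecMul w M⁻¹ := by rw [hw, hu]
      _ = t := by rw [ht, dotProduct_comm]
  -- (d) ⟨b, b⟩ = t
  have hbb : Matrix.vecMul b S⁻¹ ⬝ᵥ b = t := by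
    have hbz : Matrix.vecMul b S⁻¹ = z := by
      rw [hb, Matrix.vecMul_vecMul, hSinv', Matrix.vecMul_one]
    calc Matrix.vecMul b S⁻¹ ⬝ᵥ b
        = z ⬝ᵥ (Sᵀ *ᵥ z) := by rw [hbz, hb, Matrix.mulVec_transpose]
      _ = Matrix.vecMul z Sᵀ ⬝ᵥ z := by rw [Matrix.dotProduct_mulVec]
      _ = Matrix.vecMul u (Pᵀ * S) ⬝ᵥ (P *ᵥ u) := by
          rw [hSt, hz, Matrix.vecMul_vecMul, Matrix.vecMul_transpose]
      _ = Matrix.vecMul (Matrix.vecMul u (Pᵀ * S)) P ⬝ᵥ u := by rw [Matrix.dotProduct_mulVec]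
      _ = Matrix.vecMul u M ⬝ᵥ u := by rw [Matrix.vecMul_vecMul, hM]
      _ = Matrix.vecMul w (M⁻¹ * M) ⬝ᵥ u := by rw [hu, Matrix.vecMul_vecMul]
      _ = w ⬝ᵥ Matrix.vecMul w M⁻¹ := by rw [hMinv, Matrix.vecMul_one, hu]
      _ = t := by rw [ht, dotProduct_comm]
  -- (c) ⟨b, v⟩ = t
  have hbv : Matrix.vecMul b S⁻¹ ⬝ᵥ v = t := by rw [symm_quad hSit, hvb]
  -- nonnegativity of ⟨v - b, v - b⟩
  have hnn : 0 ≤ Matrix.vecMul (v - b) S⁻¹ ⬝ᵥ (v - b) := by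
    have := hS.inv.posSemidef.dotProduct_mulVec_nonneg (v - b)
    simp only [star_trivial] at this
    rwa [Matrix.dotProduct_mulVec] at this
  have hexp : Matrix.vecMul (v - b) S⁻¹ ⬝ᵥ (v - b)
      = Matrix.vecMul v S⁻¹ ⬝ᵥ v - Matrix.vecMul v S⁻¹ ⬝ᵥ b
        - Matrix.vecMul b S⁻¹ ⬝ᵥ v + Matrix.vecMul b S⁻¹ ⬝ᵥ b := by
    rw [Matrix.sub_vecMul, sub_dotProduct, dotProduct_sub, dotProduct_sub]
    ring
  rw [hexp, hx, hvb, hbv, hbb] at hnn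
  -- conclude
  have : t ≤ c ^ 2 := by linarith
  exact this
end

section
/- The image under x ↦ xP of the solid ellipsoid {x ∈ ℝ^p : (x−μ) Σ⁻¹ (x−μ)^T ≤ c²} is exactly the solid ellipse {y ∈ ℝ² : (y − μP)(P^T Σ P)⁻¹(y − μP)^T ≤ c²}. -/
open Matrix

theorem solid_ellipsoid_image_eq_solid_ellipse {p : ℕ}
    (S : Matrix (Fin p) (Fin p) ℝ) (hS : S.PosDef)
    (μ : Fin p → ℝ) (c : ℝ) (hc : 0 < c)
    (P : Matrix (Fin p) (Fin 2) ℝ) (hP : Pᵀ * P = 1) :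
    (fun x : Fin p → ℝ => Matrix.vecMul x P) ''
        {x | Matrix.vecMul (x - μ) S⁻¹ ⬝ᵥ (x - μ) ≤ c ^ 2} =
      {y | Matrix.vecMul (y - Matrix.vecMul μ P) (Pᵀ * S * P)⁻¹ ⬝ᵥ
        (y - Matrix.vecMul μ P) ≤ c ^ 2} := by
  set T := Pᵀ * S * P with hTdef
  have hSH : Sᴴ = S := hS.isHermitian
  have hSsym : Sᵀ = S := by simpa using hSH
  have hPinj : ∀ x : Fin 2 → ℝ, P *ᵥ x = 0 → x = 0 := by
    intro x hx
    have := congrArg (fun v => Pᵀ *ᵥ v) hx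
    simpa [Matrix.mulVec_mulVec, hP] using this
  have hT : T.PosDef := by
    rw [Matrix.posDef_iff_dotProduct_mulVec]
    constructor
    · show Tᴴ = T
      have h : Tᵀ = T := by
        rw [hTdef, Matrix.transpose_mul, Matrix.transpose_mul, Matrix.transpose_transpose,
          hSsym, Matrix.mul_assoc]
      simpa using h
    · intro x hx
      have h1 : P *ᵥ x ≠ 0 := fun h => hx (hPinj x h)
      have h2 := (Matrix.posDef_iff_dotProduct_mulVec.1 hS).2 (x := P *ᵥ x) h1
      simpa [hTdef, star_trivial, ← Matrix.mulVec_mulVec, dotProduct_mulVec,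
        vecMul_transpose, Matrix.dotProduct_mulVec] using h2
  have hSdet : IsUnit S.det := isUnit_iff_ne_zero.2 hS.det_pos.ne'
  have hTdet : IsUnit T.det := isUnit_iff_ne_zero.2 hT.det_pos.ne'
  have hTT : T⁻¹ * T = 1 := Matrix.nonsing_inv_mul T hTdet
  have hTsym : Tᵀ = T := by rw [← Matrix.conjTranspose_eq_transpose_of_trivial]; exact hT.isHermitian.eq
  have hSinvsym : (S⁻¹)ᵀ = S⁻¹ := by
    rw [Matrix.transpose_nonsing_inv, hSsym]
  have symdot : ∀ a b : Fin p → ℝ, a ᵥ* S⁻¹ ⬝ᵥ b = b ᵥ* S⁻¹ ⬝ᵥ a := by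
    intro a b
    rw [← Matrix.dotProduct_mulVec, dotProduct_comm]
    conv_rhs => rw [← hSinvsym, Matrix.vecMul_transpose]
  have keyP : ∀ d : Fin 2 → ℝ, (d ᵥ* (T⁻¹ * (Pᵀ * S))) ᵥ* P = d := by
    intro d
    rw [Matrix.vecMul_vecMul, Matrix.mul_assoc, Matrix.mul_assoc, ← Matrix.mul_assoc (Pᵀ),
      ← hTdef, hTT]
    simp
  have keyC : ∀ (d : Fin 2 → ℝ) (v : Fin p → ℝ),
      (d ᵥ* (T⁻¹ * (Pᵀ * S))) ᵥ* S⁻¹ ⬝ᵥ v = d ᵥ* T⁻¹ ⬝ᵥ (v ᵥ* P) := by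
    intro d v
    rw [Matrix.vecMul_vecMul, Matrix.mul_assoc, Matrix.mul_assoc,
      Matrix.mul_nonsing_inv S hSdet, Matrix.mul_one, ← Matrix.vecMul_vecMul,
      ← Matrix.dotProduct_mulVec, Matrix.mulVec_transpose]
  have keyB : ∀ d : Fin 2 → ℝ,
      (d ᵥ* (T⁻¹ * (Pᵀ * S))) ᵥ* S⁻¹ ⬝ᵥ (d ᵥ* (T⁻¹ * (Pᵀ * S))) = d ᵥ* T⁻¹ ⬝ᵥ d := by
    intro d
    rw [keyC, keyP]
  ext y
  simp only [Set.mem_image, Set.mem_setOf_eq]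
  constructor
  · rintro ⟨x, hx, rfl⟩
    have hyd : x ᵥ* P - μ ᵥ* P = (x - μ) ᵥ* P := by rw [Matrix.sub_vecMul]
    rw [hyd]
    obtain ⟨v, hv⟩ : ∃ v, v = x - μ := ⟨_, rfl⟩
    rw [← hv] at hx ⊢
    obtain ⟨d, hd⟩ : ∃ d, d = v ᵥ* P := ⟨_, rfl⟩
    rw [← hd]
    obtain ⟨u, huu⟩ : ∃ u, u = d ᵥ* (T⁻¹ * (Pᵀ * S)) := ⟨_, rfl⟩
    have h1 : u ᵥ* S⁻¹ ⬝ᵥ v = d ᵥ* T⁻¹ ⬝ᵥ d := by rw [huu, keyC, ← hd]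
    have h2 : u ᵥ* S⁻¹ ⬝ᵥ u = d ᵥ* T⁻¹ ⬝ᵥ d := by rw [huu, keyB]
    have h3 : v ᵥ* S⁻¹ ⬝ᵥ u = d ᵥ* T⁻¹ ⬝ᵥ d := by rw [symdot v u]; exact h1
    have hpsd : 0 ≤ (v - u) ᵥ* S⁻¹ ⬝ᵥ (v - u) := by
      have h := (Matrix.posSemidef_iff_dotProduct_mulVec.1 hS.inv.posSemidef).2 (v - u)
      rwa [star_trivial, Matrix.dotProduct_mulVec] at h
    have hexp : (v - u) ᵥ* S⁻¹ ⬝ᵥ (v - u) = v ᵥ* S⁻¹ ⬝ᵥ v - d ᵥ* T⁻¹ ⬝ᵥ d := by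
      rw [Matrix.sub_vecMul, sub_dotProduct, dotProduct_sub,
        dotProduct_sub, h1, h2, h3]
      ring
    linarith [hexp ▸ hpsd]
  · intro hy
    refine ⟨μ + (y - μ ᵥ* P) ᵥ* (T⁻¹ * (Pᵀ * S)), ?_, ?_⟩
    · show (μ + _ - μ) ᵥ* S⁻¹ ⬝ᵥ (μ + _ - μ) ≤ c ^ 2
      rw [add_sub_cancel_left, keyB]
      exact hy
    · show (μ + _) ᵥ* P = y
      rw [Matrix.add_vecMul, keyP]
      abel
end

section
/- Let Σ be symmetric positive definite and P have orthonormal columns. For any x ∈ ℝ^p, the projected Mahalanobis quadratic form is bounded by the full one: (x−μ) P (P^T Σ P)⁻¹ P^T (x−μ)^T ≤ (x−μ) Σ⁻¹ (x−μ)^T. -/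
open Matrix
open scoped MatrixOrder

private lemma dot_self_nonneg' {n : ℕ} (v : Fin n → ℝ) : 0 ≤ v ⬝ᵥ v :=
  Finset.sum_nonneg fun _ _ => mul_self_nonneg _

private lemma proj_quad_le {n : ℕ} (N : Matrix (Fin n) (Fin n) ℝ)
    (hsym : Nᵀ = N) (hidem : N * N = N) (w : Fin n → ℝ) :
    (w ᵥ* N) ⬝ᵥ w ≤ w ⬝ᵥ w := by
  have hsym' : (1 - N)ᵀ = 1 - N := by rw [transpose_sub, transpose_one, hsym]
  set u := w ᵥ* (1 - N) with hu
  have h1 : (1 - N) * (1 - N) = 1 - N := by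
    rw [Matrix.sub_mul, Matrix.mul_sub, Matrix.mul_sub, hidem]
    simp [Matrix.one_mul, Matrix.mul_one]
  have hmv : (1 - N) *ᵥ w = u := by
    rw [← hsym', mulVec_transpose]
  have h2 : u ⬝ᵥ u = (w ᵥ* (1 - N)) ⬝ᵥ w := by
    calc u ⬝ᵥ u = u ⬝ᵥ ((1 - N) *ᵥ w) := by rw [hmv]
      _ = (u ᵥ* (1 - N)) ⬝ᵥ w := dotProduct_mulVec u (1 - N) w
      _ = (w ᵥ* (1 - N)) ⬝ᵥ w := by rw [hu, vecMul_vecMul, h1]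
  have h3 : (w ᵥ* (1 - N)) ⬝ᵥ w = w ⬝ᵥ w - (w ᵥ* N) ⬝ᵥ w := by
    rw [vecMul_sub, sub_dotProduct, vecMul_one]
  have h0 : 0 ≤ u ⬝ᵥ u := dot_self_nonneg' u
  rw [h2, h3] at h0
  linarith

theorem projected_quadratic_form_le_full {p : ℕ}
    (S : Matrix (Fin p) (Fin p) ℝ) (hS : S.PosDef)
    (μ x : Fin p → ℝ)
    (P : Matrix (Fin p) (Fin 2) ℝ) (hP : Pᵀ * P = 1) :
    Matrix.vecMul (x - μ) (P * (Pᵀ * S * P)⁻¹ * Pᵀ) ⬝ᵥ (x - μ) ≤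
      Matrix.vecMul (x - μ) S⁻¹ ⬝ᵥ (x - μ) := by
  have hSt : Sᵀ = S := by
    rw [← conjTranspose_eq_transpose_of_trivial]; exact hS.isHermitian.eq
  set v := x - μ with hv
  set A := CFC.sqrt S with hA
  have hAA : A * A = S := CFC.sqrt_mul_sqrt_self S hS.posSemidef.nonneg
  have hAt : Aᵀ = A := by
    have := (CFC.sqrt_nonneg S).posSemidef.isHermitian
    simpa [Matrix.IsHermitian, conjTranspose_eq_transpose_of_trivial] using this
  have hdetS : S.det ≠ 0 := hS.det_pos.ne'
  have hdetA : A.det ≠ 0 := by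
    intro h; apply hdetS; rw [← hAA, det_mul, h, mul_zero]
  have hAinv : IsUnit A.det := isUnit_iff_ne_zero.mpr hdetA
  have hPinj : ∀ y : Fin 2 → ℝ, P *ᵥ y = 0 → y = 0 := by
    intro y hy
    have : Pᵀ *ᵥ (P *ᵥ y) = 0 := by rw [hy, mulVec_zero]
    rwa [mulVec_mulVec, hP, one_mulVec] at this
  have hB : (Pᵀ * S * P).PosDef := by
    rw [posDef_iff_dotProduct_mulVec]; constructor
    · show (Pᵀ * S * P)ᴴ = Pᵀ * S * P
      rw [conjTranspose_eq_transpose_of_trivial, transpose_mul, transpose_mul,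
        transpose_transpose, hSt, Matrix.mul_assoc]
    · intro y hy
      have hPy : P *ᵥ y ≠ 0 := fun h => hy (hPinj y h)
      have hpos := hS.dotProduct_mulVec_pos hPy
      rw [star_trivial] at hpos ⊢
      calc (0:ℝ) < (P *ᵥ y) ⬝ᵥ (S *ᵥ (P *ᵥ y)) := hpos
        _ = (y ᵥ* Pᵀ) ⬝ᵥ (S *ᵥ (P *ᵥ y)) := by rw [vecMul_transpose]
        _ = y ⬝ᵥ (Pᵀ *ᵥ (S *ᵥ (P *ᵥ y))) := (dotProduct_mulVec y Pᵀ _).symm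
        _ = y ⬝ᵥ ((Pᵀ * S * P) *ᵥ y) := by rw [mulVec_mulVec, mulVec_mulVec, Matrix.mul_assoc]
  have hdetB : IsUnit (Pᵀ * S * P).det := isUnit_iff_ne_zero.mpr hB.det_pos.ne'
  have hBh : (Pᵀ * S * P)ᵀ = Pᵀ * S * P := by
    rw [transpose_mul, transpose_mul, transpose_transpose, hSt, Matrix.mul_assoc]
  have hBt : ((Pᵀ * S * P)⁻¹)ᵀ = (Pᵀ * S * P)⁻¹ := by
    rw [transpose_nonsing_inv, hBh]
  set B := (Pᵀ * S * P)⁻¹ with hBdef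
  have hNt : (A * P * B * Pᵀ * A)ᵀ = A * P * B * Pᵀ * A := by
    simp only [transpose_mul, transpose_transpose, hAt, hBt, Matrix.mul_assoc]
  have hNN : (A * P * B * Pᵀ * A) * (A * P * B * Pᵀ * A) = A * P * B * Pᵀ * A := by
    have key : Pᵀ * A * (A * P) = Pᵀ * S * P := by
      rw [Matrix.mul_assoc, ← Matrix.mul_assoc A A P, hAA, Matrix.mul_assoc]
    calc A * P * B * Pᵀ * A * (A * P * B * Pᵀ * A)
        = A * P * (B * ((Pᵀ * A * (A * P)) * B)) * Pᵀ * A := by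
          simp only [Matrix.mul_assoc]
      _ = A * P * B * Pᵀ * A := by
          rw [key, hBdef, Matrix.mul_nonsing_inv _ hdetB, Matrix.mul_one]
  have hkey : A⁻¹ * (A * P * B * Pᵀ * A) * A⁻¹ = P * B * Pᵀ := by
    have e : A⁻¹ * (A * P * B * Pᵀ * A) * A⁻¹ = A⁻¹ * A * (P * B * Pᵀ) * (A * A⁻¹) := by
      simp only [Matrix.mul_assoc]
    rw [e, Matrix.nonsing_inv_mul _ hAinv, Matrix.mul_nonsing_inv _ hAinv,
      Matrix.one_mul, Matrix.mul_one]
  have hSinv2 : S⁻¹ = A⁻¹ * A⁻¹ := by rw [← hAA, Matrix.mul_inv_rev]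
  have hAit : (A⁻¹)ᵀ = A⁻¹ := by rw [transpose_nonsing_inv, hAt]
  set w := v ᵥ* A⁻¹ with hw
  have hwv : A⁻¹ *ᵥ v = w := by rw [← hAit, mulVec_transpose]
  have hL : v ᵥ* (P * B * Pᵀ) ⬝ᵥ v = (w ᵥ* (A * P * B * Pᵀ * A)) ⬝ᵥ w := by
    rw [← hkey, ← vecMul_vecMul, ← vecMul_vecMul, ← dotProduct_mulVec, hwv]
  have hR : v ᵥ* S⁻¹ ⬝ᵥ v = w ⬝ᵥ w := by
    rw [hSinv2, ← vecMul_vecMul, ← dotProduct_mulVec, hwv]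
  rw [hL, hR]
  exact proj_quad_le _ hNt hNN w
end

section
/- Let Σ be symmetric positive definite, μ ∈ ℝ^p, c > 0, and P a p×2 matrix with orthonormal columns. If x satisfies (x−μ) Σ⁻¹ (x−μ)^T ≤ c² (x inside the p-dimensional ellipsoid), then its projection y = xP satisfies (y−μP)(P^T Σ P)⁻¹(y−μP)^T ≤ c² (y inside the projected ellipse). Equivalently, a point whose projection lies strictly outside the projected ellipse must lie outside the full ellipsoid. -/
open Matrix

private lemma cs_lemma {p : ℕ} (M : Matrix (Fin p) (Fin p) ℝ) (hM : M.PosSemidef)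
    (a b : Fin p → ℝ) :
    (a ⬝ᵥ M *ᵥ b) ^ 2 ≤ (a ⬝ᵥ M *ᵥ a) * (b ⬝ᵥ M *ᵥ b) := by
  have hMt : Mᵀ = M := by
    ext i j
    have := congrFun (congrFun hM.isHermitian.eq i) j
    simpa [Matrix.conjTranspose_apply] using this
  have hsym : ∀ u v : Fin p → ℝ, u ⬝ᵥ M *ᵥ v = v ⬝ᵥ M *ᵥ u := by
    intro u v
    rw [dotProduct_mulVec, ← mulVec_transpose, dotProduct_comm, hMt]
  have key : ∀ t : ℝ, 0 ≤ (a ⬝ᵥ M *ᵥ a) * (t * t) + (2 * (a ⬝ᵥ M *ᵥ b)) * t + (b ⬝ᵥ M *ᵥ b) := by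
    intro t
    have h0 : 0 ≤ (t • a + b) ⬝ᵥ M *ᵥ (t • a + b) := by
      simpa using hM.dotProduct_mulVec_nonneg (t • a + b)
    have hexp : (t • a + b) ⬝ᵥ M *ᵥ (t • a + b)
        = (a ⬝ᵥ M *ᵥ a) * (t * t) + (2 * (a ⬝ᵥ M *ᵥ b)) * t + (b ⬝ᵥ M *ᵥ b) := by
      simp only [mulVec_add, mulVec_smul, add_dotProduct, smul_dotProduct, dotProduct_add,
        dotProduct_smul, smul_eq_mul]
      rw [hsym b a]
      ring
    linarith [hexp ▸ h0]
  have hd := discrim_le_zero key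
  rw [discrim] at hd
  nlinarith [hd]

theorem inside_ellipsoid_projects_inside_ellipse {p : ℕ}
    (S : Matrix (Fin p) (Fin p) ℝ) (hS : S.PosDef)
    (μ x : Fin p → ℝ) (c : ℝ) (hc : 0 < c)
    (P : Matrix (Fin p) (Fin 2) ℝ) (hP : Pᵀ * P = 1)
    (hx : Matrix.vecMul (x - μ) S⁻¹ ⬝ᵥ (x - μ) ≤ c ^ 2) :
    Matrix.vecMul (Matrix.vecMul x P - Matrix.vecMul μ P) (Pᵀ * S * P)⁻¹ ⬝ᵥ
      (Matrix.vecMul x P - Matrix.vecMul μ P) ≤ c ^ 2 := by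
  have hSt : Sᵀ = S := by
    ext i j
    have := congrFun (congrFun hS.isHermitian.eq i) j
    simpa [Matrix.conjTranspose_apply] using this
  have hsub : Matrix.vecMul x P - Matrix.vecMul μ P = Matrix.vecMul (x - μ) P :=
    (Matrix.sub_vecMul P x μ).symm
  rw [hsub]
  have hT : (Pᵀ * S * P).PosDef := by
    refine Matrix.posDef_iff_dotProduct_mulVec.mpr ⟨?_, ?_⟩
    · show (Pᵀ * S * P)ᴴ = Pᵀ * S * P
      have ht : (Pᵀ * S * P)ᵀ = Pᵀ * S * P := by
        rw [Matrix.transpose_mul, Matrix.transpose_mul, Matrix.transpose_transpose, hSt,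
          Matrix.mul_assoc]
      ext i j
      simp only [Matrix.conjTranspose_apply, star_trivial]
      exact congrFun (congrFun ht i) j
    · intro y hy
      have hPy : P *ᵥ y ≠ 0 := by
        intro h
        apply hy
        have h2 : Pᵀ *ᵥ (P *ᵥ y) = y := by
          rw [Matrix.mulVec_mulVec, hP, Matrix.one_mulVec]
        rw [h, Matrix.mulVec_zero] at h2
        exact h2.symm
      have h1 : (P *ᵥ y) ⬝ᵥ S *ᵥ (P *ᵥ y) = y ⬝ᵥ (Pᵀ * S * P) *ᵥ y := by
        rw [← Matrix.vecMul_transpose P y, Matrix.dotProduct_mulVec, Matrix.vecMul_vecMul,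
          Matrix.vecMul_transpose P y, Matrix.dotProduct_mulVec, Matrix.vecMul_vecMul,
          ← Matrix.dotProduct_mulVec]
      rw [star_trivial, ← h1]
      simpa using hS.dotProduct_mulVec_pos hPy
  have hTinv : (Pᵀ * S * P)⁻¹ * (Pᵀ * S * P) = 1 :=
    Matrix.nonsing_inv_mul _ ((Matrix.isUnit_iff_isUnit_det _).mp hT.isUnit)
  have hSinv : S⁻¹ * S = 1 :=
    Matrix.nonsing_inv_mul _ ((Matrix.isUnit_iff_isUnit_det _).mp hS.isUnit)
  set v : Fin p → ℝ := x - μ with hv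
  set y : Fin 2 → ℝ := Matrix.vecMul v P with hy
  set w : Fin 2 → ℝ := Matrix.vecMul y (Pᵀ * S * P)⁻¹ with hw
  set u : Fin p → ℝ := P *ᵥ w with hu
  set z : Fin p → ℝ := Matrix.vecMul v S⁻¹ with hz
  set Q : ℝ := Matrix.vecMul y (Pᵀ * S * P)⁻¹ ⬝ᵥ y with hQ
  set R : ℝ := Matrix.vecMul v S⁻¹ ⬝ᵥ v with hR
  -- key identities
  have hSz : S *ᵥ z = v := by
    calc S *ᵥ z = Sᵀ *ᵥ z := by rw [hSt]
      _ = Matrix.vecMul z S := Matrix.mulVec_transpose S z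
      _ = Matrix.vecMul v (S⁻¹ * S) := by rw [hz, Matrix.vecMul_vecMul]
      _ = v := by rw [hSinv, Matrix.vecMul_one]
  have huv : u ⬝ᵥ v = Q := by
    rw [hu, dotProduct_comm, Matrix.dotProduct_mulVec, dotProduct_comm, hQ, hw, hy]
  have huSu : u ⬝ᵥ S *ᵥ u = Q := by
    have e1 : u ⬝ᵥ S *ᵥ u = Matrix.vecMul u S ⬝ᵥ u := Matrix.dotProduct_mulVec u S u
    have e2 : Matrix.vecMul u S = Matrix.vecMul w (Pᵀ * S) := by
      rw [hu, ← Matrix.vecMul_transpose, Matrix.vecMul_vecMul]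
    have e3 : Matrix.vecMul w (Pᵀ * S) ⬝ᵥ u = Matrix.vecMul w (Pᵀ * S * P) ⬝ᵥ w := by
      rw [hu, Matrix.dotProduct_mulVec, Matrix.vecMul_vecMul]
    have e4 : Matrix.vecMul w (Pᵀ * S * P) = y := by
      rw [hw, Matrix.vecMul_vecMul, hTinv, Matrix.vecMul_one]
    rw [e1, e2, e3, e4, dotProduct_comm, hQ, hw]
  have huSz : u ⬝ᵥ S *ᵥ z = Q := by rw [hSz, huv]
  have hzSz : z ⬝ᵥ S *ᵥ z = R := by rw [hSz, hz, hR]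
  have hcs := cs_lemma S hS.posSemidef u z
  rw [huSz, huSu, hzSz] at hcs
  show Q ≤ c ^ 2
  have hRc : R ≤ c ^ 2 := hx
  rcases le_or_gt Q 0 with h | h
  · nlinarith
  · nlinarith
end

section
/- Let Σ be symmetric positive definite with Σ⁻¹ also symmetric, and let x be a boundary point of the ellipsoid E = {x : (x−μ) Σ⁻¹ (x−μ)^T = c²} such that the normal direction (x−μ)Σ⁻¹ lies in the column space of P (a p×2 orthonormal matrix). Then the projection xP lies on the boundary ellipse {y : (y−μP)(P^TΣP)⁻¹(y−μP)^T = c²}, i.e. satisfies the equality. -/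
open Matrix

theorem tangent_point_projects_to_boundary {p : ℕ}
    (S : Matrix (Fin p) (Fin p) ℝ) (hS : S.PosDef)
    (μ x : Fin p → ℝ) (c : ℝ) (hc : 0 < c)
    (P : Matrix (Fin p) (Fin 2) ℝ) (hP : Pᵀ * P = 1)
    (hx : Matrix.vecMul (x - μ) S⁻¹ ⬝ᵥ (x - μ) = c ^ 2)
    (hnormal : ∃ s : Fin 2 → ℝ, Matrix.vecMul (x - μ) S⁻¹ = Matrix.vecMul s Pᵀ) :
    Matrix.vecMul (Matrix.vecMul x P - Matrix.vecMul μ P) (Pᵀ * S * P)⁻¹ ⬝ᵥ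
      (Matrix.vecMul x P - Matrix.vecMul μ P) = c ^ 2 := by
  obtain ⟨s, hs⟩ := hnormal
  set v := x - μ with hv
  have hvP : Matrix.vecMul x P - Matrix.vecMul μ P = Matrix.vecMul v P := by
    rw [hv, Matrix.sub_vecMul]
  -- PᵀSP is positive definite
  have hM : (Pᵀ * S * P).PosDef := by
    refine Matrix.PosDef.of_dotProduct_mulVec_pos ?_ ?_
    · have h1 : Sᵀ = S := hS.1
      unfold Matrix.IsHermitian
      rw [show (Pᵀ * S * P)ᴴ = (Pᵀ * S * P)ᵀ from rfl]
      rw [Matrix.transpose_mul, Matrix.transpose_mul, Matrix.transpose_transpose, h1,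
        Matrix.mul_assoc]
    · intro y hy
      have hPy : P *ᵥ y ≠ 0 := by
        intro h
        apply hy
        have : Pᵀ *ᵥ (P *ᵥ y) = 0 := by rw [h, Matrix.mulVec_zero]
        rwa [Matrix.mulVec_mulVec, hP, Matrix.one_mulVec] at this
      have h2 := hS.dotProduct_mulVec_pos hPy
      have heq : star y ⬝ᵥ (Pᵀ * S * P) *ᵥ y = star (P *ᵥ y) ⬝ᵥ S *ᵥ (P *ᵥ y) := by
        simp only [star_trivial, ← Matrix.mulVec_mulVec, Matrix.dotProduct_mulVec,
          Matrix.vecMul_transpose]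
      rw [heq]; exact h2
  have hinv : IsUnit (Pᵀ * S * P).det := isUnit_iff_ne_zero.2 hM.det_pos.ne'
  have hSinv : IsUnit S.det := isUnit_iff_ne_zero.2 hS.det_pos.ne'
  -- v = vecMul (vecMul s Pᵀ) S
  have hv2 : v = Matrix.vecMul (Matrix.vecMul s Pᵀ) S := by
    have := congrArg (fun w => Matrix.vecMul w S) hs
    simpa [Matrix.vecMul_vecMul, Matrix.nonsing_inv_mul S hSinv] using this
  have hvPs : Matrix.vecMul v P = Matrix.vecMul s (Pᵀ * S * P) := by
    rw [hv2]; simp [Matrix.vecMul_vecMul, Matrix.mul_assoc]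
  have hkey : Matrix.vecMul (Matrix.vecMul v P) (Pᵀ * S * P)⁻¹ = s := by
    rw [hvPs, Matrix.vecMul_vecMul, Matrix.mul_nonsing_inv _ hinv, Matrix.vecMul_one]
  rw [hvP, hkey]
  -- s ⬝ᵥ vecMul v P = vecMul s Pᵀ ⬝ᵥ v = vecMul v S⁻¹ ⬝ᵥ v = c²
  have : s ⬝ᵥ Matrix.vecMul v P = Matrix.vecMul s Pᵀ ⬝ᵥ v := by
    rw [← Matrix.mulVec_transpose, Matrix.dotProduct_mulVec]
  rw [this, ← hs, hx]
end

section
/- Let Σ be symmetric positive definite, P a p×2 matrix with orthonormal columns, and c > 0. The supremum over boundary points x of the p-dimensional ellipsoid {x : (x−μ)Σ⁻¹(x−μ)^T = c²} of the projected quadratic form (xP − μP)(P^TΣP)⁻¹(xP − μP)^T equals c², and it is attained. -/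
open Matrix

lemma aux_A_posdef {p : ℕ} (S : Matrix (Fin p) (Fin p) ℝ) (hS : S.PosDef)
    (P : Matrix (Fin p) (Fin 2) ℝ) (hP : Pᵀ * P = 1) : (Pᵀ * S * P).PosDef := by
  have hSsymm : Sᵀ = S := by simpa using hS.isHermitian.eq
  refine Matrix.PosDef.of_dotProduct_mulVec_pos ?_ ?_
  · show (Pᵀ * S * P)ᴴ = _
    simp [Matrix.conjTranspose_mul, Matrix.mul_assoc, hSsymm]
  · intro x hx
    have hPx : P *ᵥ x ≠ 0 := by
      intro h
      apply hx
      have : Pᵀ *ᵥ (P *ᵥ x) = x := by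
        rw [Matrix.mulVec_mulVec, hP, Matrix.one_mulVec]
      rw [h, Matrix.mulVec_zero] at this
      exact this.symm
    have h2 := hS.dotProduct_mulVec_pos hPx
    have : star x ⬝ᵥ (Pᵀ * S * P) *ᵥ x = star (P *ᵥ x) ⬝ᵥ S *ᵥ (P *ᵥ x) := by
      rw [← Matrix.mulVec_mulVec, ← Matrix.mulVec_mulVec, Matrix.dotProduct_mulVec,
        Matrix.vecMul_transpose]
      simp [Matrix.dotProduct_mulVec]
    rw [this]; exact h2

theorem sup_projected_form_on_boundary {p : ℕ}
    (S : Matrix (Fin p) (Fin p) ℝ) (hS : S.PosDef)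
    (μ : Fin p → ℝ) (c : ℝ) (hc : 0 < c)
    (P : Matrix (Fin p) (Fin 2) ℝ) (hP : Pᵀ * P = 1) :
    IsGreatest
      {r : ℝ | ∃ x : Fin p → ℝ,
        Matrix.vecMul (x - μ) S⁻¹ ⬝ᵥ (x - μ) = c ^ 2 ∧
        r = Matrix.vecMul (Matrix.vecMul x P - Matrix.vecMul μ P) (Pᵀ * S * P)⁻¹ ⬝ᵥ
          (Matrix.vecMul x P - Matrix.vecMul μ P)}
      (c ^ 2) := by
  have hSsymm : Sᵀ = S := by simpa using hS.isHermitian.eq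
  set A := Pᵀ * S * P with hA
  have hApd : A.PosDef := aux_A_posdef S hS P hP
  have hAsymm : Aᵀ = A := by simpa using hApd.isHermitian.eq
  have hSS : S * S⁻¹ = 1 := Matrix.mul_nonsing_inv S (isUnit_iff_ne_zero.mpr hS.det_pos.ne')
  have hAA : A * A⁻¹ = 1 := Matrix.mul_nonsing_inv A (isUnit_iff_ne_zero.mpr hApd.det_pos.ne')
  have hAinvsymm : (A⁻¹)ᵀ = A⁻¹ := by rw [Matrix.transpose_nonsing_inv, hAsymm]
  have key1 : ∀ z : Fin 2 → ℝ,
      Matrix.vecMul (Matrix.vecMul z (Pᵀ * S)) S⁻¹ ⬝ᵥ Matrix.vecMul z (Pᵀ * S)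
        = z ⬝ᵥ A *ᵥ z := by
    intro z
    rw [Matrix.vecMul_vecMul, Matrix.mul_assoc, hSS, Matrix.mul_one,
      ← Matrix.dotProduct_mulVec, ← Matrix.mulVec_transpose, Matrix.mulVec_mulVec]
    simp [hA, Matrix.transpose_mul, hSsymm, Matrix.mul_assoc]
  have key2 : ∀ z : Fin 2 → ℝ,
      Matrix.vecMul (Matrix.vecMul z (Pᵀ * S)) P = Matrix.vecMul z A := by
    intro z; rw [Matrix.vecMul_vecMul]
  constructor
  · -- membership: attained
    have hA00 : 0 < A 0 0 := by
      have h10 : (![1, 0] : Fin 2 → ℝ) ≠ 0 := by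
        intro h; simpa using congrFun h 0
      have := hApd.dotProduct_mulVec_pos h10
      simpa [dotProduct, Matrix.mulVec, Fin.sum_univ_two] using this
    set t : ℝ := c / Real.sqrt (A 0 0) with ht
    set z : Fin 2 → ℝ := ![t, 0] with hz
    refine ⟨Matrix.vecMul z (Pᵀ * S) + μ, ?_, ?_⟩
    · have : Matrix.vecMul z (Pᵀ * S) + μ - μ = Matrix.vecMul z (Pᵀ * S) := by abel
      rw [this, key1]
      have : z ⬝ᵥ A *ᵥ z = t ^ 2 * A 0 0 := by
        simp [hz, dotProduct, Matrix.mulVec, Fin.sum_univ_two]; ring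
      rw [this, ht, div_pow, Real.sq_sqrt hA00.le, div_mul_cancel₀]
      exact hA00.ne'
    · have hsub : Matrix.vecMul (Matrix.vecMul z (Pᵀ * S) + μ) P - Matrix.vecMul μ P
          = Matrix.vecMul (Matrix.vecMul z (Pᵀ * S)) P := by
        rw [Matrix.add_vecMul]; abel
      rw [hsub, key2, Matrix.vecMul_vecMul, hAA, Matrix.vecMul_one,
        ← Matrix.mulVec_transpose, hAsymm]
      have : z ⬝ᵥ A *ᵥ z = t ^ 2 * A 0 0 := by
        simp [hz, dotProduct, Matrix.mulVec, Fin.sum_univ_two]; ring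
      rw [this, ht, div_pow, Real.sq_sqrt hA00.le, div_mul_cancel₀]
      exact hA00.ne'
  · -- upper bound
    rintro r ⟨x, hx, rfl⟩
    set y : Fin p → ℝ := x - μ with hy
    set v : Fin 2 → ℝ := Matrix.vecMul y P with hv
    have hvsub : Matrix.vecMul x P - Matrix.vecMul μ P = v := by
      rw [hv, hy, Matrix.sub_vecMul]
    rw [hvsub]
    set w : Fin 2 → ℝ := Matrix.vecMul v A⁻¹ with hw
    set r : ℝ := Matrix.vecMul v A⁻¹ ⬝ᵥ v with hr
    show r ≤ c ^ 2
    set y' : Fin p → ℝ := Matrix.vecMul w (Pᵀ * S) with hy'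
    -- y' S⁻¹ y' = r
    have e1 : Matrix.vecMul y' S⁻¹ ⬝ᵥ y' = r := by
      rw [hy', key1, hw, ← Matrix.mulVec_transpose, Matrix.mulVec_mulVec, hAinvsymm,
        hAA, Matrix.one_mulVec, hr, ← Matrix.mulVec_transpose, hAinvsymm,
        dotProduct_comm, Matrix.dotProduct_mulVec]
    -- y' S⁻¹ y = r
    have e2 : Matrix.vecMul y' S⁻¹ ⬝ᵥ y = r := by
      rw [hy', Matrix.vecMul_vecMul, Matrix.mul_assoc, hSS, Matrix.mul_one,
        ← Matrix.dotProduct_mulVec, Matrix.mulVec_transpose, ← hv, hw, hr,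
        dotProduct_comm]
    -- symmetry of S⁻¹ bilinear form: y S⁻¹ y' = r too
    have hSinvsymm : (S⁻¹)ᵀ = S⁻¹ := by rw [Matrix.transpose_nonsing_inv, hSsymm]
    have hmv : S⁻¹ *ᵥ y' = Matrix.vecMul y' S⁻¹ := by
      conv_lhs => rw [← hSinvsymm]
      rw [Matrix.mulVec_transpose]
    have e3 : Matrix.vecMul y S⁻¹ ⬝ᵥ y' = r := by
      rw [← e2, ← Matrix.dotProduct_mulVec, hmv, dotProduct_comm]
    -- nonnegativity of the quadratic for the combination y' - (r/c²) y
    have quad : ∀ u : Fin p → ℝ, 0 ≤ Matrix.vecMul u S⁻¹ ⬝ᵥ u := by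
      intro u
      have := hS.inv.posSemidef.dotProduct_mulVec_nonneg u
      simpa [Matrix.dotProduct_mulVec] using this
    have hq := quad (y' + (-(r / c ^ 2)) • y)
    have expand : Matrix.vecMul (y' + (-(r / c ^ 2)) • y) S⁻¹ ⬝ᵥ (y' + (-(r / c ^ 2)) • y)
        = r - 2 * (r / c ^ 2) * r + (r / c ^ 2) ^ 2 * c ^ 2 := by
      rw [Matrix.add_vecMul, Matrix.smul_vecMul, add_dotProduct,
        smul_dotProduct, dotProduct_add, dotProduct_add,
        dotProduct_smul, dotProduct_smul, e1, e2, e3, hx]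
      simp [smul_eq_mul]; ring
    rw [expand] at hq
    have hc2 : (0:ℝ) < c ^ 2 := by positivity
    have key : r ^ 2 ≤ r * c ^ 2 := by
      have h1 : r - 2 * (r / c ^ 2) * r + (r / c ^ 2) ^ 2 * c ^ 2 = r - r ^ 2 / c ^ 2 := by
        field_simp; ring
      rw [h1] at hq
      have := (div_le_iff₀ hc2).mp (by linarith : r ^ 2 / c ^ 2 ≤ r)
      linarith
    nlinarith [sq_nonneg (r - c ^ 2)]
end
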